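/- Let X, S, Z be independent zero-mean Gaussian random variables with variances P, Q, N respectively (P,Q,N>0), Y = X+S+Z, α = P/(P+N), and U = X+αS. Then I(U;Y) − I(U;S) = ½·log₂(1+P/N). -/

import Mathlib

open RealInnerProductSpace

/-- Gram matrix of a finite family of vectors (covariance matrix of zero-mean
jointly Gaussian random variables modeled as elements of an inner product space). -/
noncomputable def gramM {V : Type*} [NormedAddCommGroup V] [InnerProductSpace ℝ V] {n : ℕ}
    (v : Fin n → V) : Matrix (Fin n) (Fin n) ℝ := Matrix.of fun i j => ⟪v i, v j⟫

/-- (Conditional) mutual information `I(x ; y | z)` of jointly Gaussian zero-mean random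
variables, expressed by the standard Gaussian determinant formula (base-2 logarithm). -/
noncomputable def gMI {V : Type*} [NormedAddCommGroup V] [InnerProductSpace ℝ V] {a b c : ℕ}
    (x : Fin a → V) (y : Fin b → V) (z : Fin c → V) : ℝ :=
  (1/2) * Real.logb 2 (((gramM (Fin.append x z)).det * (gramM (Fin.append y z)).det) /
    ((gramM (Fin.append x (Fin.append y z))).det * (gramM z).det))

lemma gMI_one_one {V : Type*} [NormedAddCommGroup V] [InnerProductSpace ℝ V] (u y : V) :
    gMI ![u] ![y] (![] : Fin 0 → V) =
      (1/2) * Real.logb 2 ((⟪u,u⟫ * ⟪y,y⟫) / (⟪u,u⟫*⟪y,y⟫ - ⟪u,y⟫*⟪y,u⟫)) := by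
  simp [gMI, gramM, Matrix.det_fin_one, Matrix.det_fin_two, Fin.append, Fin.addCases,
    Matrix.det_fin_zero]

/-- Costa's dirty-paper coding identity: with `Y = X + S + Z`,
`α = P/(P+N)` and `U = X + αS`, one has `I(U;Y) - I(U;S) = ½ log₂(1 + P/N)`. -/
theorem stmt5 {V : Type*} [NormedAddCommGroup V] [InnerProductSpace ℝ V]
    (P Q N : ℝ) (hP : 0 < P) (hQ : 0 < Q) (hN : 0 < N)
    (x s z y u : V)
    (hx : ⟪x, x⟫ = P) (hs : ⟪s, s⟫ = Q) (hz : ⟪z, z⟫ = N)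
    (hxs : ⟪x, s⟫ = 0) (hxz : ⟪x, z⟫ = 0) (hsz : ⟪s, z⟫ = 0)
    (hy : y = x + s + z) (hu : u = x + (P / (P + N)) • s) :
    gMI ![u] ![y] (![] : Fin 0 → V) - gMI ![u] ![s] (![] : Fin 0 → V) =
      (1/2) * Real.logb 2 (1 + P / N) := by
  have hPN : (0:ℝ) < P + N := by linarith
  have hsx : ⟪s, x⟫ = (0:ℝ) := by rw [real_inner_comm]; exact hxs
  have hzx : ⟪z, x⟫ = (0:ℝ) := by rw [real_inner_comm]; exact hxz
  have hzs : ⟪z, s⟫ = (0:ℝ) := by rw [real_inner_comm]; exact hsz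
  set α : ℝ := P / (P + N) with hα
  have hαpos : 0 < α := div_pos hP hPN
  have huu : ⟪u, u⟫ = P + α^2*Q := by
    rw [hu]; simp [inner_add_left, inner_add_right, real_inner_smul_left,
      real_inner_smul_right, hx, hs, hxs, hsx, -inner_self_eq_norm_sq_to_K]; ring
  have huy : ⟪u, y⟫ = P + α*Q := by
    rw [hu, hy]; simp [inner_add_left, inner_add_right, real_inner_smul_left,
      hx, hs, hz, hxs, hsx, hxz, hzx, hsz, hzs, -inner_self_eq_norm_sq_to_K]
  have hyu : ⟪y, u⟫ = P + α*Q := by rw [real_inner_comm]; exact huy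
  have hyy : ⟪y, y⟫ = P + Q + N := by
    rw [hy]; simp [inner_add_left, inner_add_right, hx, hs, hz, hxs, hsx, hxz, hzx, hsz, hzs,
      -inner_self_eq_norm_sq_to_K]
  have hus : ⟪u, s⟫ = α*Q := by
    rw [hu]; simp [inner_add_left, real_inner_smul_left, hs, hxs, -inner_self_eq_norm_sq_to_K]
  have hsu : ⟪s, u⟫ = α*Q := by rw [real_inner_comm]; exact hus
  rw [gMI_one_one, gMI_one_one, huu, huy, hyu, hyy, hus, hsu, hs]
  have hApos : 0 < P + α^2*Q := by positivity
  have hD1 : (P + α^2*Q)*(P + Q + N) - (P + α*Q)*(P + α*Q) = P*N*(P+Q+N)/(P+N) := by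
    rw [hα]; field_simp; ring
  have hD2 : (P + α^2*Q)*Q - (α*Q)*(α*Q) = P*Q := by ring
  rw [hD1, hD2, ← mul_sub]
  have ha1 : ((P + α^2*Q)*(P + Q + N)) / (P*N*(P+Q+N)/(P+N)) ≠ 0 := by positivity
  have ha2 : ((P + α^2*Q)*Q) / (P*Q) ≠ 0 := by positivity
  have hPQN : (0:ℝ) < P + Q + N := by linarith
  have harg : ((P + α^2*Q)*(P + Q + N)) / (P*N*(P+Q+N)/(P+N)) /
      (((P + α^2*Q)*Q)/(P*Q)) = 1 + P/N := by
    rw [hα]; field_simp; ring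
  rw [← Real.logb_div ha1 ha2, harg]
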